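/- arXiv:1106.4977 — 5 statements merged into one kernel-verified Lean document; each statement's English description precedes it below -/
import Mathlib

section
/- Let A ⊂ ℝ be a finite set and let λ ∈ ℝ with λ > 1. For k ∈ ℕ let S_k ⊂ ℝ be the set of real numbers s of the form s = Σ_{i=1}^{l} c_i λ^{n_i} where l ≤ k and c_i ∈ A, n_i ∈ ℤ_{≥0} for each i. Then S_k is a discrete subset of ℝ for each k; that is, for every s ∈ S_k there exists ε > 0 such that S_k ∩ (s − ε, s + ε) = {s}. -/
/-- The set `S_k` of real numbers of the form `∑_{i=1}^l c_i λ^{n_i}` with `l ≤ k`,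
`c_i ∈ A` and `n_i ∈ ℕ`. -/
def GHK.Sset (A : Finset ℝ) (lam : ℝ) (k : ℕ) : Set ℝ :=
  {s : ℝ | ∃ l : ℕ, l ≤ k ∧ ∃ c : Fin l → ℝ, ∃ n : Fin l → ℕ,
    (∀ i, c i ∈ A) ∧ s = ∑ i, c i * lam ^ (n i)}

open Pointwise

namespace GHK

lemma Sset_step (A : Finset ℝ) (lam : ℝ) (k : ℕ) :
    Sset A lam (k+1) ⊆ {0} ∪ ⋃ n : ℕ, (fun x => lam ^ n * x) '' ((A : Set ℝ) + Sset A lam k) := by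
  rintro s ⟨l, hl, c, n, hc, rfl⟩
  match l with
  | 0 => left; simp
  | m+1 =>
    right
    obtain ⟨j, -, hj⟩ := Finset.exists_min_image Finset.univ n ⟨0, Finset.mem_univ 0⟩
    refine Set.mem_iUnion.2 ⟨n j, ?_⟩
    refine ⟨c j + ∑ i : Fin m, c (j.succAbove i) * lam ^ (n (j.succAbove i) - n j), ?_, ?_⟩
    · exact Set.add_mem_add (hc j)
        ⟨m, Nat.le_of_succ_le_succ hl, _, _, fun i => hc _, rfl⟩
    · rw [Fin.sum_univ_succAbove (fun i => c i * lam ^ n i) j]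
      dsimp only
      rw [mul_add, Finset.mul_sum]
      congr 1
      · ring
      · refine Finset.sum_congr rfl fun i _ => ?_
        have h := hj (j.succAbove i) (Finset.mem_univ _)
        have h2 : lam ^ n j * lam ^ (n (j.succAbove i) - n j) = lam ^ n (j.succAbove i) := by
          rw [← pow_add, Nat.add_sub_cancel' h]
        rw [← h2]; ring

lemma Sset_bdd_finite (A : Finset ℝ) (lam : ℝ) (hlam : 1 < lam) (k : ℕ) :
    ∀ M : ℝ, (Sset A lam k ∩ Set.Icc (-M) M).Finite := by
  induction k with
  | zero =>
    intro M
    apply Set.Finite.subset (Set.finite_singleton 0)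
    rintro s ⟨⟨l, hl, c, n, hc, rfl⟩, -⟩
    obtain rfl := Nat.le_zero.mp hl
    simp
  | succ k ih =>
    intro M
    obtain ⟨B0, hB0⟩ := (A.finite_toSet.image abs).bddAbove
    set B : ℝ := max B0 0 with hBdef
    have hB : ∀ a ∈ A, |a| ≤ B := fun a ha =>
      le_max_of_le_left (hB0 (Set.mem_image_of_mem _ ha))
    have hF : (((A : Set ℝ) + Sset A lam k) ∩ Set.Icc (-M) M).Finite := by
      apply Set.Finite.subset (Set.Finite.image (fun p : ℝ × ℝ => p.1 + p.2)
        (A.finite_toSet.prod (ih (M + B))))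
      rintro t ⟨⟨a, ha, u, hu, rfl⟩, ht⟩
      refine ⟨(a, u), ⟨ha, hu, ?_⟩, rfl⟩
      have h1 : |a + u| ≤ M := abs_le.2 ht
      have h2 : |u| ≤ M + B := by
        obtain ⟨hb1, hb2⟩ := abs_le.1 (hB a ha)
        obtain ⟨hm1, hm2⟩ := abs_le.1 h1
        rw [abs_le]; constructor <;> linarith
      exact abs_le.1 h2
    set F := (((A : Set ℝ) + Sset A lam k) ∩ Set.Icc (-M) M) with hFdef
    have hF' : (F \ {0}).Finite := hF.subset Set.diff_subset
    obtain ⟨δ, hδ0, hδ⟩ : ∃ δ > (0:ℝ), ∀ t ∈ F, t ≠ 0 → δ ≤ |t| := by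
      by_cases hne : (F \ {0}).Nonempty
      · have hGne : hF'.toFinset.Nonempty := by
          rwa [← Set.Finite.toFinset_nonempty hF'] at hne
        obtain ⟨t0, ht0, hmin⟩ := hF'.toFinset.exists_min_image (fun t => |t|) hGne
        rw [Set.Finite.mem_toFinset] at ht0
        refine ⟨|t0|, abs_pos.2 ht0.2, fun t ht htne => ?_⟩
        exact hmin t (by rw [Set.Finite.mem_toFinset]; exact ⟨ht, htne⟩)
      · exact ⟨1, one_pos, fun t ht htne => absurd ⟨t, ht, htne⟩ hne⟩
    obtain ⟨N, hN⟩ := pow_unbounded_of_one_lt (M / δ) hlam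
    apply Set.Finite.subset ((Set.finite_singleton (0:ℝ)).union
      ((Finset.range N).finite_toSet.biUnion fun n _ => hF.image fun x => lam ^ n * x))
    rintro s ⟨hs, hsI⟩
    rcases Sset_step A lam k hs with h0 | hs'
    · exact Or.inl h0
    rw [Set.mem_iUnion] at hs'
    obtain ⟨n, t, ht, rfl⟩ := hs'
    have hlp : (0:ℝ) < lam ^ n := pow_pos (lt_trans one_pos hlam) n
    have hlp1 : (1:ℝ) ≤ lam ^ n := one_le_pow₀ hlam.le
    have habs : |lam ^ n * t| = lam ^ n * |t| := by
      rw [abs_mul, abs_of_pos hlp]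
    have hsM : lam ^ n * |t| ≤ M := by
      rw [← habs]; exact abs_le.2 hsI
    have htM : |t| ≤ M := le_trans (le_mul_of_one_le_left (abs_nonneg t) hlp1) hsM
    have htF : t ∈ F := ⟨ht, abs_le.1 htM⟩
    by_cases ht0 : t = 0
    · subst ht0; left; simp
    · right
      have hδt := hδ t htF ht0
      have hpow : lam ^ n ≤ M / δ := by
        rw [le_div_iff₀ hδ0]
        calc lam ^ n * δ ≤ lam ^ n * |t| := by nlinarith
          _ ≤ M := hsM
      have hnN : n < N := by
        have : lam ^ n < lam ^ N := lt_of_le_of_lt hpow hN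
        exact (pow_lt_pow_iff_right₀ hlam).1 this
      exact Set.mem_biUnion (by simpa using hnN) ⟨t, htF, rfl⟩

theorem Sset_discrete_aux (A : Finset ℝ) (lam : ℝ) (hlam : 1 < lam) (k : ℕ) :
    ∀ s ∈ GHK.Sset A lam k, ∃ ε > (0 : ℝ),
      GHK.Sset A lam k ∩ Set.Ioo (s - ε) (s + ε) = {s} := by
  intro s hs
  have hT : (Sset A lam k ∩ Set.Icc (-(|s| + 1)) (|s| + 1)).Finite :=
    Sset_bdd_finite A lam hlam k (|s| + 1)
  set T := Sset A lam k ∩ Set.Icc (-(|s| + 1)) (|s| + 1) with hTdef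
  have hT' : (T \ {s}).Finite := hT.subset Set.diff_subset
  obtain ⟨ε, hε0, hε1, hεmin⟩ : ∃ ε > (0:ℝ), ε ≤ 1 ∧ ∀ t ∈ T, t ≠ s → ε ≤ |t - s| := by
    by_cases hne : (T \ {s}).Nonempty
    · have hGne : hT'.toFinset.Nonempty := by
        rwa [← Set.Finite.toFinset_nonempty hT'] at hne
      obtain ⟨t0, ht0, hmin⟩ := hT'.toFinset.exists_min_image (fun t => |t - s|) hGne
      rw [Set.Finite.mem_toFinset] at ht0
      have h0 : 0 < |t0 - s| := abs_pos.2 (sub_ne_zero.2 ht0.2)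
      refine ⟨min |t0 - s| 1, lt_min h0 one_pos, min_le_right _ _, fun t ht htne => ?_⟩
      exact le_trans (min_le_left _ _)
        (hmin t (by rw [Set.Finite.mem_toFinset]; exact ⟨ht, htne⟩))
    · exact ⟨1, one_pos, le_refl 1, fun t ht htne => absurd ⟨t, ht, htne⟩ hne⟩
  refine ⟨ε, hε0, ?_⟩
  ext t
  constructor
  · rintro ⟨htS, htI⟩
    have htd : |t - s| < ε := by
      rw [abs_sub_lt_iff]; constructor <;> [linarith [htI.2]; linarith [htI.1]]
    by_contra htne
    have htT : t ∈ T := by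
      refine ⟨htS, ?_⟩
      have h1 : |t - s| ≤ 1 := le_of_lt (lt_of_lt_of_le htd hε1)
      have := abs_le.1 h1
      have := abs_le.1 (le_refl |s|)
      constructor <;> nlinarith
    exact absurd htd (not_lt.2 (hεmin t htT (by simpa using htne)))
  · rintro rfl
    exact ⟨hs, by constructor <;> linarith⟩

end GHK

/-- Lemma `discrete`: for a finite set `A ⊂ ℝ` and `λ > 1`, the set `S_k` is discrete
for each `k`. -/
theorem GHK.Sset_discrete (A : Finset ℝ) (lam : ℝ) (hlam : 1 < lam) (k : ℕ) :
    ∀ s ∈ GHK.Sset A lam k, ∃ ε > (0 : ℝ),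
      GHK.Sset A lam k ∩ Set.Ioo (s - ε) (s + ε) = {s} := by
  exact GHK.Sset_discrete_aux A lam hlam k
end

section
/- Let (a_i)_{i ∈ ℤ} be a sequence of integers with a_i ≥ 2 for all i. Define vectors v_i ∈ ℤ² by v₀ = (1,0), v₁ = (0,1), and the recursion v_{i−1} + v_{i+1} = a_i v_i for all i ∈ ℤ. Then det(v_i, v_{i+1}) = 1 for all i ∈ ℤ, and det(v_i, v_j) ≥ j − i for all integers i < j; in particular the vectors v_i, i ∈ ℤ, are pairwise distinct. -/
/-- The determinant of the 2×2 integer matrix with columns `u`, `w`. -/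
def GHK.det2 (u w : ℤ × ℤ) : ℤ := u.1 * w.2 - u.2 * w.1

/-- The computation underlying Lemma `developingmap` and Example `negdefexample`:
for integers `a_i ≥ 2` and vectors `v_i ∈ ℤ²` with `v₀ = (1,0)`, `v₁ = (0,1)` and
`v_{i−1} + v_{i+1} = a_i v_i`, one has `det(v_i, v_{i+1}) = 1` for all `i`,
`det(v_i, v_j) ≥ j − i` for all `i < j`, and the `v_i` are pairwise distinct. -/
theorem GHK.developing_map_det (a : ℤ → ℤ) (ha : ∀ i, 2 ≤ a i)
    (v : ℤ → ℤ × ℤ) (h0 : v 0 = (1, 0)) (h1 : v 1 = (0, 1))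
    (hrec : ∀ i : ℤ, v (i - 1) + v (i + 1) = a i • v i) :
    (∀ i : ℤ, GHK.det2 (v i) (v (i + 1)) = 1) ∧
    (∀ i j : ℤ, i < j → j - i ≤ GHK.det2 (v i) (v j)) ∧
    Function.Injective v := by
  -- component form of the recursion
  have hc1 : ∀ i : ℤ, (v (i-1)).1 + (v (i+1)).1 = a i * (v i).1 := by
    intro i
    have h := congrArg Prod.fst (hrec i)
    simpa using h
  have hc2 : ∀ i : ℤ, (v (i-1)).2 + (v (i+1)).2 = a i * (v i).2 := by
    intro i
    have h := congrArg Prod.snd (hrec i)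
    simpa using h
  -- general step for det against a fixed vector
  have fstep : ∀ x i : ℤ,
      GHK.det2 (v x) (v (i+1)) = a i * GHK.det2 (v x) (v i) - GHK.det2 (v x) (v (i-1)) := by
    intro x i
    have h1 := hc1 i
    have h2 := hc2 i
    unfold GHK.det2
    linear_combination (v x).1 * h2 - (v x).2 * h1
  -- the consecutive determinant is constant
  have Dstep : ∀ i : ℤ, GHK.det2 (v i) (v (i+1)) = GHK.det2 (v (i-1)) (v i) := by
    intro i
    have h1 := hc1 i
    have h2 := hc2 i
    unfold GHK.det2
    linear_combination (v i).1 * h2 - (v i).2 * h1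
  have D01 : GHK.det2 (v 0) (v 1) = 1 := by
    rw [h0, h1]; rfl
  have Done : ∀ i : ℤ, GHK.det2 (v i) (v (i+1)) = 1 := by
    intro i
    induction i using Int.induction_on with
    | zero => simpa using D01
    | succ k ih =>
        have he : (k:ℤ) + 1 - 1 = k := by ring
        rw [Dstep ((k:ℤ) + 1), he]
        exact ih
    | pred k ih =>
        have := Dstep (-(k:ℤ))
        have h' : GHK.det2 (v (-(k:ℤ) - 1)) (v (-(k:ℤ))) = 1 := by
          rw [← this]
          simpa using ih
        have he : (-(k:ℤ) - 1) + 1 = -(k:ℤ) := by ring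
        calc GHK.det2 (v (-(k:ℤ)-1)) (v (-(k:ℤ)-1+1))
            = GHK.det2 (v (-(k:ℤ)-1)) (v (-(k:ℤ))) := by rw [he]
          _ = 1 := h'
  have selfzero : ∀ x : ℤ, GHK.det2 (v x) (v x) = 0 := by
    intro x; unfold GHK.det2; ring
  -- growth estimate
  have grow : ∀ (i : ℤ) (n : ℕ),
      (n : ℤ) ≤ GHK.det2 (v i) (v (i + n)) ∧
      GHK.det2 (v i) (v (i + n)) + 1 ≤ GHK.det2 (v i) (v (i + n + 1)) := by
    intro i n
    induction n with
    | zero =>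
        constructor
        · simpa using (selfzero i).ge
        · have : GHK.det2 (v i) (v (i + 1)) = 1 := Done i
          simp [selfzero i, this]
    | succ n ih =>
        obtain ⟨ih1, ih2⟩ := ih
        have hfn1 : (n : ℤ) + 1 ≤ GHK.det2 (v i) (v (i + n + 1)) := by linarith
        constructor
        · push_cast
          calc ((n:ℤ) + 1) ≤ GHK.det2 (v i) (v (i + n + 1)) := hfn1
            _ = GHK.det2 (v i) (v (i + (n + 1))) := by ring_nf
        · have hs := fstep i (i + n + 1)
          have he1 : (i + (n:ℤ) + 1) + 1 = i + ((n:ℕ):ℤ) + 2 := by ring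
          have he2 : (i + (n:ℤ) + 1) - 1 = i + ((n:ℕ):ℤ) := by ring
          rw [he1, he2] at hs
          have ha' := ha (i + n + 1)
          have hpos : (1:ℤ) ≤ GHK.det2 (v i) (v (i + n + 1)) := by
            have : (0:ℤ) ≤ n := Int.natCast_nonneg n
            linarith
          have key : GHK.det2 (v i) (v (i + n + 1)) + 1 ≤ GHK.det2 (v i) (v (i + n + 2)) := by
            rw [hs]
            nlinarith [hfn1, ih2]
          have vc : ∀ x y : ℤ, x = y → GHK.det2 (v i) (v x) = GHK.det2 (v i) (v y) :=
            fun x y h => by rw [h]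
          rw [vc (i + ((n:ℕ)+1:ℕ)) (i + (n:ℤ) + 1) (by push_cast; ring),
              vc (i + ((n:ℕ)+1:ℕ) + 1) (i + (n:ℤ) + 2) (by push_cast; ring)]
          exact key
  have part2 : ∀ i j : ℤ, i < j → j - i ≤ GHK.det2 (v i) (v j) := by
    intro i j hij
    have hn : 0 ≤ j - i := by omega
    obtain ⟨n, hn'⟩ := Int.eq_ofNat_of_zero_le hn
    have hj : j = i + n := by omega
    have := (grow i n).1
    rw [hj]
    simpa using this
  refine ⟨Done, part2, ?_⟩
  intro i j hvij
  by_contra hne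
  rcases lt_or_gt_of_ne hne with h | h
  · have := part2 i j h
    rw [hvij, selfzero j] at this
    omega
  · have := part2 j i h
    rw [hvij, selfzero j] at this
    omega
end

section
/- Let k be a field, let A₁ and A₂ be finitely generated commutative k-algebras, let B be a commutative k-algebra, and let f₁ : A₁ → B and f₂ : A₂ → B be surjective k-algebra homomorphisms. Then the fibre product A₁ ×_B A₂ := {(a₁, a₂) ∈ A₁ × A₂ : f₁(a₁) = f₂(a₂)} is a finitely generated k-algebra. -/
/-- The claim inside the proof of Lemma `intlemma`: if `A₁`, `A₂` are finitely generated
commutative algebras over a field `k`, `B` is a commutative `k`-algebra, and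
`f₁ : A₁ → B`, `f₂ : A₂ → B` are surjective `k`-algebra homomorphisms, then the fibre
product `A₁ ×_B A₂ = {(a₁, a₂) : f₁(a₁) = f₂(a₂)}`, viewed as a subalgebra of
`A₁ × A₂`, is a finitely generated `k`-algebra. -/
theorem GHK.fibreProduct_fg {k A₁ A₂ B : Type*} [Field k]
    [CommRing A₁] [CommRing A₂] [CommRing B]
    [Algebra k A₁] [Algebra k A₂] [Algebra k B]
    (hA₁ : Algebra.FiniteType k A₁) (hA₂ : Algebra.FiniteType k A₂)
    (f₁ : A₁ →ₐ[k] B) (f₂ : A₂ →ₐ[k] B)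
    (hf₁ : Function.Surjective f₁) (hf₂ : Function.Surjective f₂) :
    (AlgHom.equalizer (f₁.comp (AlgHom.fst k A₁ A₂))
      (f₂.comp (AlgHom.snd k A₁ A₂))).FG := by
  classical
  obtain ⟨s₁, hs₁⟩ := hA₁.1
  obtain ⟨s₂, hs₂⟩ := hA₂.1
  haveI : IsNoetherianRing A₂ := Algebra.FiniteType.isNoetherianRing k A₂
  obtain ⟨t, ht⟩ : (RingHom.ker (f₂ : A₂ →+* B)).FG :=
    IsNoetherian.noetherian _
  set P := AlgHom.equalizer (f₁.comp (AlgHom.fst k A₁ A₂))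
      (f₂.comp (AlgHom.snd k A₁ A₂)) with hP
  have memP : ∀ p : A₁ × A₂, p ∈ P ↔ f₁ p.1 = f₂ p.2 := fun p => Iff.rfl
  -- lifts
  have hl : ∀ a : A₁, ∃ b : A₂, f₂ b = f₁ a := fun a => hf₂ (f₁ a)
  have hm : ∀ b : A₂, ∃ a : A₁, f₁ a = f₂ b := fun b => hf₁ (f₂ b)
  choose l hl using hl
  choose m hm using hm
  set G : Finset (A₁ × A₂) :=
    s₁.image (fun x => (x, l x)) ∪ s₂.image (fun y => (m y, y)) ∪
      t.image (fun z => ((0 : A₁), z)) with hG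
  refine ⟨G, le_antisymm (Algebra.adjoin_le ?_) ?_⟩
  · intro p hp
    simp only [hG, Finset.coe_union, Finset.coe_image, Set.mem_union, Set.mem_image,
      Finset.mem_coe] at hp
    rcases hp with (⟨x, _, rfl⟩ | ⟨y, _, rfl⟩) | ⟨z, hz, rfl⟩
    · exact (memP _).2 (hl x).symm
    · exact (memP _).2 (hm y)
    · refine (memP _).2 ?_
      have : z ∈ RingHom.ker (f₂ : A₂ →+* B) := by rw [← ht]; exact Ideal.subset_span hz
      simpa using this.symm
  · -- first coordinate surjectivity of the adjoin
    have hfst : ∀ a : A₁, ∃ b : A₂, (a, b) ∈ Algebra.adjoin k (G : Set (A₁ × A₂)) := by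
      intro a
      have hmap : (Algebra.adjoin k (G : Set (A₁ × A₂))).map (AlgHom.fst k A₁ A₂) = ⊤ := by
        rw [AlgHom.map_adjoin]
        rw [eq_top_iff, ← hs₁]
        apply Algebra.adjoin_mono
        intro x hx
        exact ⟨(x, l x), by
          simp only [hG, Finset.coe_union, Finset.coe_image, Set.mem_union, Set.mem_image,
            Finset.mem_coe]
          exact Or.inl (Or.inl ⟨x, hx, rfl⟩), rfl⟩
      have : a ∈ (Algebra.adjoin k (G : Set (A₁ × A₂))).map (AlgHom.fst k A₁ A₂) := by
        rw [hmap]; trivial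
      obtain ⟨p, hp, hpe⟩ := this
      exact ⟨p.2, by rwa [show (a, p.2) = p from Prod.ext hpe.symm rfl]⟩
    have hsnd : ∀ b : A₂, ∃ a : A₁, (a, b) ∈ Algebra.adjoin k (G : Set (A₁ × A₂)) := by
      intro b
      have hmap : (Algebra.adjoin k (G : Set (A₁ × A₂))).map (AlgHom.snd k A₁ A₂) = ⊤ := by
        rw [AlgHom.map_adjoin]
        rw [eq_top_iff, ← hs₂]
        apply Algebra.adjoin_mono
        intro y hy
        exact ⟨(m y, y), by
          simp only [hG, Finset.coe_union, Finset.coe_image, Set.mem_union, Set.mem_image,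
            Finset.mem_coe]
          exact Or.inl (Or.inr ⟨y, hy, rfl⟩), rfl⟩
      have : b ∈ (Algebra.adjoin k (G : Set (A₁ × A₂))).map (AlgHom.snd k A₁ A₂) := by
        rw [hmap]; trivial
      obtain ⟨p, hp, hpe⟩ := this
      exact ⟨p.1, by rwa [show (p.1, b) = p from Prod.ext rfl hpe.symm]⟩
    -- kernel elements
    have hker : ∀ c ∈ RingHom.ker (f₂ : A₂ →+* B),
        ((0 : A₁), c) ∈ Algebra.adjoin k (G : Set (A₁ × A₂)) := by
      intro c hc
      rw [← ht] at hc
      induction hc using Submodule.span_induction with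
      | mem z hz =>
          apply Algebra.subset_adjoin
          simp only [hG, Finset.coe_union, Finset.coe_image, Set.mem_union, Set.mem_image,
            Finset.mem_coe]
          exact Or.inr ⟨z, hz, rfl⟩
      | zero => exact (Algebra.adjoin k (G : Set (A₁ × A₂))).zero_mem
      | add c₁ c₂ _ _ h₁ h₂ =>
          have := Subalgebra.add_mem _ h₁ h₂
          simpa using this
      | smul r c _ hcmem =>
          obtain ⟨r', hr'⟩ := hsnd r
          have := Subalgebra.mul_mem _ hr' hcmem
          simpa [smul_eq_mul] using this
    intro p hp
    have hpe : f₁ p.1 = f₂ p.2 := (memP p).1 hp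
    obtain ⟨b, hb⟩ := hfst p.1
    have hbP : f₁ p.1 = f₂ b := by
      have := Algebra.adjoin_le (show (G : Set (A₁ × A₂)) ⊆ P by
        intro q hq
        simp only [hG, Finset.coe_union, Finset.coe_image, Set.mem_union, Set.mem_image,
          Finset.mem_coe] at hq
        rcases hq with (⟨x, _, rfl⟩ | ⟨y, _, rfl⟩) | ⟨z, hz, rfl⟩
        · exact (memP _).2 (hl x).symm
        · exact (memP _).2 (hm y)
        · refine (memP _).2 ?_
          have : z ∈ RingHom.ker (f₂ : A₂ →+* B) := by rw [← ht]; exact Ideal.subset_span hz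
          simpa using this.symm) hb
      exact (memP _).1 this
    have hdk : p.2 - b ∈ RingHom.ker (f₂ : A₂ →+* B) := by
      simp only [RingHom.mem_ker, map_sub]
      show f₂ p.2 - f₂ b = 0
      rw [hpe.symm.trans hbP, sub_self]
    have := Subalgebra.add_mem _ hb (hker _ hdk)
    simpa [Prod.ext_iff] using this
end

section
/- Let a, b, c be positive real numbers, let λ ∈ ℝ with λ > 1, and let 0 < δ ≤ ε < 1. Then there exists a constant C > 0 such that for all N ∈ ℕ and all real x with δ ≤ x ≤ ε one has λ^{aN} · x^{c·λ^{bN}} ≤ C · x^N. -/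
set_option maxHeartbeats 1000000 in
/-- The concluding estimate in the proof of Lemma `brokenlinebounds`: for constants
`a, b, c > 0`, `λ > 1` and `0 < δ ≤ ε < 1`, there is a constant `C > 0` such that
`λ^{aN} · x^{c·λ^{bN}} ≤ C·x^N` for all `N ∈ ℕ` and all `x` with `δ ≤ x ≤ ε`.
(Here real exponents denote real powers.) -/
theorem GHK.brokenline_estimate (a b c lam δ ε : ℝ)
    (ha : 0 < a) (hb : 0 < b) (hc : 0 < c) (hlam : 1 < lam)
    (hδ : 0 < δ) (hδε : δ ≤ ε) (hε : ε < 1) :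
    ∃ C > (0 : ℝ), ∀ N : ℕ, ∀ x : ℝ, δ ≤ x → x ≤ ε →
      lam ^ (a * (N : ℝ)) * x ^ (c * lam ^ (b * (N : ℝ))) ≤ C * x ^ N := by
  have hlam0 : (0:ℝ) < lam := lt_trans one_pos hlam
  have hε0 : (0:ℝ) < ε := hδ.trans_le hδε
  set L := Real.log lam with hLdef
  have hL : 0 < L := Real.log_pos hlam
  have hu : Real.log ε < 0 := Real.log_neg hε0 hε
  set d := Real.log δ with hddef
  set u := Real.log ε with hudef
  set K := a * L - d with hKdef
  set M := c * (-u) with hMdef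
  have hM : 0 < M := mul_pos hc (neg_pos.2 hu)
  set β := b * L with hβdef
  have hβ : 0 < β := mul_pos hb hL
  set q := M * β^2 / 4 with hqdef
  have hq : 0 < q := by positivity
  refine ⟨Real.exp (K^2/(4*q)), Real.exp_pos _, ?_⟩
  intro N x hx1 hx2
  have hx0 : 0 < x := hδ.trans_le hx1
  have hexp0 : 0 ≤ c * lam ^ (b * (N:ℝ)) := by positivity
  have h1 : x ^ (c * lam ^ (b * (N:ℝ))) ≤ ε ^ (c * lam ^ (b * (N:ℝ))) :=
    Real.rpow_le_rpow hx0.le hx2 hexp0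
  have h2 : lam ^ (a*(N:ℝ)) * x ^ (c * lam ^ (b*(N:ℝ)))
      ≤ lam ^ (a*(N:ℝ)) * ε ^ (c * lam ^ (b*(N:ℝ))) :=
    mul_le_mul_of_nonneg_left h1 (Real.rpow_nonneg hlam0.le _)
  refine h2.trans ?_
  have hδN : δ ^ N ≤ x ^ N := pow_le_pow_left₀ hδ.le hx1 N
  have key : lam ^ (a*(N:ℝ)) * ε ^ (c * lam ^ (b*(N:ℝ)))
      ≤ Real.exp (K^2/(4*q)) * δ ^ N := by
    have e1 : lam ^ (a*(N:ℝ)) = Real.exp (a * (N:ℝ) * L) := by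
      rw [Real.rpow_def_of_pos hlam0, hLdef]; ring_nf
    have e2 : lam ^ (b*(N:ℝ)) = Real.exp (β * (N:ℝ)) := by
      rw [Real.rpow_def_of_pos hlam0, hβdef, hLdef]; ring_nf
    have e3 : ε ^ (c * lam ^ (b*(N:ℝ))) = Real.exp (u * (c * Real.exp (β*(N:ℝ)))) := by
      rw [e2, Real.rpow_def_of_pos hε0]
    have e4 : δ ^ N = Real.exp (d * (N:ℝ)) := by
      rw [← Real.exp_log hδ, ← Real.exp_nat_mul]
      ring_nf
      rw [hddef]
    rw [e1, e3, e4, ← Real.exp_add, ← Real.exp_add]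
    apply Real.exp_le_exp.2
    have hE : (β*(N:ℝ))^2/4 ≤ Real.exp (β*(N:ℝ)) := by
      have h := Real.add_one_le_exp (β*(N:ℝ)/2)
      have h0 : 0 ≤ β*(N:ℝ)/2 := by positivity
      have hsq : Real.exp (β*(N:ℝ)) = Real.exp (β*(N:ℝ)/2) * Real.exp (β*(N:ℝ)/2) := by
        rw [← Real.exp_add]; ring_nf
      nlinarith [Real.exp_pos (β*(N:ℝ)/2)]
    have h1 : M * ((β*(N:ℝ))^2/4) ≤ M * Real.exp (β*(N:ℝ)) :=
      mul_le_mul_of_nonneg_left hE hM.le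
    have h2 : M * ((β*(N:ℝ))^2/4) = q * (N:ℝ)^2 := by rw [hqdef]; ring
    have h2' : u*(c*Real.exp (β*(N:ℝ))) = -(M * Real.exp (β*(N:ℝ))) := by
      rw [hMdef]; ring
    have h3 : K*(N:ℝ) - q*(N:ℝ)^2 ≤ K^2/(4*q) := by
      rw [le_div_iff₀ (by positivity)]
      nlinarith [sq_nonneg (K - 2*q*(N:ℝ))]
    have h4 : a*(N:ℝ)*L = K*(N:ℝ) + d*(N:ℝ) := by rw [hKdef]; ring
    linarith
  calc lam ^ (a*(N:ℝ)) * ε ^ (c * lam ^ (b*(N:ℝ)))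
      ≤ Real.exp (K^2/(4*q)) * δ ^ N := key
    _ ≤ Real.exp (K^2/(4*q)) * x ^ N :=
        mul_le_mul_of_nonneg_left hδN (Real.exp_pos _).le
end

section
/- Let R > 1 be a real number, let (m_i)_{i ∈ ℤ} be integers with m_i ≥ 2 for all i, and let (x_i)_{i ∈ ℤ} be nonzero complex numbers and (a_i)_{i ∈ ℤ} complex numbers satisfying x_{i−1} x_{i+1} = a_i x_i^{m_i} and |a_i x_i^{m_i − 2}| < 1/R² for all i ∈ ℤ. Then |x_{j+1}/x_j| < (1/R²)^{j−i} · |x_{i+1}/x_i| for all integers j > i. Consequently, there do not exist integers i, j with j > i + 1 such that both |x_{i+1}| < R|x_i| and |x_{j−1}| < R|x_j| hold. -/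
/-- The disjointness claim from the proof of part (2) of Theorem `cuspfamily`:
let `R > 1`, let `m_i ≥ 2` be integers, and let `x_i ∈ ℂ∗`, `a_i ∈ ℂ` satisfy
`x_{i−1}x_{i+1} = a_i x_i^{m_i}` and `|a_i x_i^{m_i−2}| < 1/R²` for all `i ∈ ℤ`.
Then `|x_{j+1}/x_j| < (1/R²)^{j−i}·|x_{i+1}/x_i|` for all `j > i`, and there are no
integers `i, j` with `j > i + 1`, `|x_{i+1}| < R|x_i|` and `|x_{j−1}| < R|x_j|`. -/
theorem GHK.cusp_disjoint (R : ℝ) (hR : 1 < R)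
    (m : ℤ → ℤ) (hm : ∀ i, 2 ≤ m i)
    (x : ℤ → ℂ) (hx : ∀ i, x i ≠ 0) (a : ℤ → ℂ)
    (hrel : ∀ i : ℤ, x (i - 1) * x (i + 1) = a i * x i ^ (m i))
    (hsmall : ∀ i : ℤ, ‖a i * x i ^ (m i - 2)‖ < 1 / R ^ 2) :
    (∀ i j : ℤ, i < j →
      ‖x (j + 1) / x j‖ <
        (1 / R ^ 2) ^ (j - i) * ‖x (i + 1) / x i‖) ∧
    ¬ ∃ i j : ℤ, i + 1 < j ∧ ‖x (i + 1)‖ < R * ‖x i‖ ∧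
        ‖x (j - 1)‖ < R * ‖x j‖ := by
  have hR0 : (0:ℝ) < R := lt_trans one_pos hR
  have hRb : (0:ℝ) < 1 / R ^ 2 := by positivity
  have step' : ∀ i : ℤ, ‖x (i + 1 + 1) / x (i + 1)‖ <
      (1 / R ^ 2) * ‖x (i + 1) / x i‖ := by
    intro i
    have h := hrel (i + 1)
    rw [show i + 1 - 1 = i by ring] at h
    have hpow : x (i+1) ^ (m (i+1)) = x (i+1) ^ (m (i+1) - 2) * (x (i+1) * x (i+1)) := by
      rw [← zpow_two, ← zpow_add₀ (hx (i+1))]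
      ring_nf
    rw [hpow] at h
    have key : x (i + 1 + 1) / x (i + 1) = (a (i+1) * x (i+1) ^ (m (i+1) - 2)) * (x (i+1) / x i) := by
      field_simp [hx i, hx (i+1)]
      linear_combination h
    rw [key, norm_mul]
    exact mul_lt_mul_of_pos_right (hsmall (i+1))
      (norm_pos_iff.mpr (div_ne_zero (hx (i+1)) (hx i)))
  have part1 : ∀ i j : ℤ, i < j →
      ‖x (j + 1) / x j‖ <
        (1 / R ^ 2) ^ (j - i) * ‖x (i + 1) / x i‖ := by
    intro i j hij
    have H : ∀ j : ℤ, i + 1 ≤ j → ‖x (j + 1) / x j‖ <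
        (1 / R ^ 2) ^ (j - i) * ‖x (i + 1) / x i‖ := by
      refine Int.le_induction ?_ ?_
      · rw [show i + 1 - i = (1:ℤ) by ring, zpow_one]
        exact step' i
      · intro k hk ih
        have hstep := step' k
        rw [show k + 1 - i = (k - i) + 1 by ring, zpow_add_one₀ (ne_of_gt hRb)]
        calc ‖x (k+1+1) / x (k+1)‖
            < (1 / R ^ 2) * ‖x (k+1) / x k‖ := hstep
          _ < (1 / R ^ 2) * ((1 / R ^ 2) ^ (k - i) * ‖x (i+1) / x i‖) :=
              mul_lt_mul_of_pos_left ih hRb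
          _ = (1 / R ^ 2) ^ (k - i) * (1 / R ^ 2) * ‖x (i+1) / x i‖ := by ring
    exact H j hij
  refine ⟨part1, ?_⟩
  rintro ⟨i, j, hij, h1, h2⟩
  have hp := part1 i (j-1) (by omega)
  rw [show j - 1 + 1 = j by ring] at hp
  have hri : ‖x (i+1) / x i‖ < R := by
    rw [norm_div, div_lt_iff₀ (norm_pos_iff.mpr (hx i))]
    linarith [h1]
  have hrj : 1 / R < ‖x j / x (j-1)‖ := by
    rw [norm_div, div_lt_div_iff₀ hR0 (norm_pos_iff.mpr (hx (j-1)))]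
    linarith [h2]
  have hBle : (1 / R ^ 2 : ℝ) ^ (j - 1 - i) ≤ (1 / R ^ 2) ^ (1:ℤ) := by
    apply zpow_le_zpow_right_of_le_one₀ hRb
    · rw [div_le_one (by positivity)]; nlinarith
    · omega
  rw [zpow_one] at hBle
  have habs0 : 0 ≤ ‖x (i+1) / x i‖ := norm_nonneg _
  have h3 : ‖x j / x (j-1)‖ < (1 / R ^ 2) * R :=
    calc ‖x j / x (j-1)‖
        < (1 / R ^ 2) ^ (j - 1 - i) * ‖x (i+1) / x i‖ := hp
      _ ≤ (1 / R ^ 2) * ‖x (i+1) / x i‖ :=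
          mul_le_mul_of_nonneg_right hBle habs0
      _ < (1 / R ^ 2) * R := mul_lt_mul_of_pos_left hri hRb
  have : (1 / R ^ 2) * R = 1 / R := by field_simp
  rw [this] at h3
  linarith
end
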